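/- Let φ = ⋀_{j=1}^M (l_{j,1} ∨ l_{j,2} ∨ l_{j,3}) be a propositional formula in 3-conjunctive normal form over variables x₁,…,x_N, where each literal l_{j,h} belongs to {x₁,…,x_N, x̄₁,…,x̄_N}; write κ(j,h) for the index i with l_{j,h} ∈ {xᵢ, x̄ᵢ}, and set a_{j,h} = 2 if l_{j,h} is a positive literal and a_{j,h} = −2 otherwise. Let M_φ be the MDP with states S = {s, t} and actions Act = {α, β}, where P(s,α,s) = P(s,β,t) = P(t,β,t) = 1 and all other transition probabilities are 0. Then φ is satisfiable if and only if there exist schedulers σ₁,…,σ_N for M_φ such that |Pr^{M_φ,σᵢ}_s(◇{t}) − 1/2| > 1/4 for all 1 ≤ i ≤ N, and Σ_{h=1}^3 a_{j,h} · (Pr^{M_φ,σ_{κ(j,h)}}_s(◇{t}) − 1/2) ≥ −1 for all 1 ≤ j ≤ M. -/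

import Mathlib

open scoped Classical
open Filter

noncomputable section

/-- A Markov decision process with state space `S` and action space `A`. -/
structure MDP (S A : Type) where
  P : S → A → S → ℝ
  nonneg : ∀ s a s', 0 ≤ P s a s'
  le_one : ∀ s a s', P s a s' ≤ 1
  exists_enabled : ∀ s : S, ∃ a : A, (∑' s', P s a s') = 1
  zero_of_not_enabled : ∀ (s : S) (a : A), (∑' s', P s a s') ≠ 1 → (∑' s', P s a s') = 0

namespace MDP

variable {S A : Type}

/-- Action `a` is enabled in state `s`. -/
def Enabled (M : MDP S A) (s : S) (a : A) : Prop := (∑' s', M.P s a s') = 1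

/-- `s` is an absorbing state. -/
def AbsorbingState (M : MDP S A) (s : S) : Prop := ∀ a : A, M.Enabled s a → M.P s a s = 1

/-- An absorbing set of states: all its elements are absorbing. -/
def AbsorbingSet (M : MDP S A) (T : Set S) : Prop := ∀ s ∈ T, M.AbsorbingState s

end MDP

/-- A finite path: an initial state together with a list of (action, next state) steps. -/
abbrev FPath (S A : Type) : Type := S × List (A × S)

/-- The last state of a finite path. -/
def fpLast {S A : Type} (p : FPath S A) : S := ((p.2.map Prod.snd).getLast?).getD p.1

/-- Extending a finite path by one step. -/
def fpExt {S A : Type} (p : FPath S A) (a : A) (s' : S) : FPath S A := (p.1, p.2 ++ [(a, s')])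

/-- A (history-dependent, randomized) scheduler for the MDP `M`. -/
structure Scheduler {S A : Type} (M : MDP S A) where
  act : FPath S A → A → ℝ
  nonneg : ∀ p a, 0 ≤ act p a
  sum_one : ∀ p, (∑' a, act p a) = 1
  not_enabled : ∀ p a, ¬ M.Enabled (fpLast p) a → act p a = 0

namespace Scheduler

variable {S A : Type} {M : MDP S A}

/-- A memoryless scheduler depends only on the last state of the path. -/
def Memoryless (σ : Scheduler M) : Prop :=
  ∀ p : FPath S A, σ.act p = σ.act (fpLast p, ([] : List (A × S)))

/-- A deterministic scheduler chooses a Dirac distribution on every path. -/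
def Deterministic (σ : Scheduler M) : Prop := ∀ p : FPath S A, ∃ a : A, σ.act p a = 1

/-- A memoryless deterministic (MD) scheduler. -/
def MD (σ : Scheduler M) : Prop := σ.Memoryless ∧ σ.Deterministic

end Scheduler

/-- One-step expectation operator: expected value of `g` after one step from `p`. -/
def stepExp {S A : Type} (M : MDP S A) (σ : Scheduler M) (p : FPath S A)
    (g : FPath S A → ℝ) : ℝ :=
  ∑' a : A, ∑' s' : S, σ.act p a * M.P (fpLast p) a s' * g (fpExt p a s')

/-- Probability of visiting `T` within `n` further steps, continuing the finite path `p`. -/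
def reachN {S A : Type} (M : MDP S A) (σ : Scheduler M) (T : Set S) :
    ℕ → FPath S A → ℝ
  | 0, p => if fpLast p ∈ T then 1 else 0
  | n + 1, p => if fpLast p ∈ T then 1 else stepExp M σ p (reachN M σ T n)

/-- Reachability probability `Pr^{M,σ}_s(◇T)`. -/
def reachProb {S A : Type} (M : MDP S A) (σ : Scheduler M) (s : S) (T : Set S) : ℝ :=
  ⨆ n : ℕ, reachN M σ T n (s, [])

/-- Probability of visiting `T` at some time `≥ j` within `j + n` steps, from path `p`. -/
def reachAfterN {S A : Type} (M : MDP S A) (σ : Scheduler M) (T : Set S) :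
    ℕ → ℕ → FPath S A → ℝ
  | 0, n, p => reachN M σ T n p
  | j + 1, n, p => stepExp M σ p (fun p' => reachAfterN M σ T j n p')

/-- Büchi probability `Pr^{M,σ}_s(□◇T)`: the probability of visiting `T` infinitely often. -/
def buchiProb {S A : Type} (M : MDP S A) (σ : Scheduler M) (s : S) (T : Set S) : ℝ :=
  ⨅ j : ℕ, ⨆ n : ℕ, reachAfterN M σ T j n (s, [])

/-- Expected sum of the rewards of the first `n+1` states (counting the current one). -/
def expRewN {S A : Type} (M : MDP S A) (σ : Scheduler M) (R : S → ℝ) :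
    ℕ → FPath S A → ℝ
  | 0, p => R (fpLast p)
  | n + 1, p => R (fpLast p) + stepExp M σ p (fun p' => expRewN M σ R n p')

/-- Expected total reward `E^{M,σ}_s(R)`. -/
def expTotalReward {S A : Type} (M : MDP S A) (σ : Scheduler M) (R : S → ℝ) (s : S) : ℝ :=
  limUnder atTop (fun n => expRewN M σ R n (s, []))

end

/-- States of the 3SAT-reduction MDP: `s`, `t`. -/
inductive St19 : Type where
  | s : St19
  | t : St19
deriving DecidableEq

/-- Actions of the 3SAT-reduction MDP: `α`, `β`. -/
inductive Ac19 : Type where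
  | α : Ac19
  | β : Ac19
deriving DecidableEq

instance : Fintype St19 := ⟨{St19.s, St19.t}, fun x => by cases x <;> simp⟩
instance : Fintype Ac19 := ⟨{Ac19.α, Ac19.β}, fun x => by cases x <;> simp⟩

lemma tsum_St19 (f : St19 → ℝ) : ∑' x, f x = f St19.s + f St19.t := by
  rw [tsum_fintype]
  rw [show (Finset.univ : Finset St19) = {St19.s, St19.t} from rfl]
  rw [Finset.sum_pair (by decide)]

lemma tsum_Ac19 (f : Ac19 → ℝ) : ∑' x, f x = f Ac19.α + f Ac19.β := by
  rw [tsum_fintype]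
  rw [show (Finset.univ : Finset Ac19) = {Ac19.α, Ac19.β} from rfl]
  rw [Finset.sum_pair (by decide)]

lemma fpLast_fpExt {S A : Type} (p : FPath S A) (a : A) (s' : S) :
    fpLast (fpExt p a s') = s' := by
  unfold fpLast fpExt
  simp

lemma fpLast_nil {S A : Type} (s : S) : fpLast ((s, []) : FPath S A) = s := rfl

section Red

variable {Mφ : MDP St19 Ac19}
  (h1 : Mφ.P St19.s Ac19.α St19.s = 1)
  (h2 : Mφ.P St19.s Ac19.β St19.t = 1)
  (h3 : Mφ.P St19.t Ac19.β St19.t = 1)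
  (h0 : ∀ (x : St19) (a : Ac19) (y : St19), Mφ.P x a y ≠ 0 →
      (x = St19.s ∧ a = Ac19.α ∧ y = St19.s) ∨
      (x = St19.s ∧ a = Ac19.β ∧ y = St19.t) ∨
      (x = St19.t ∧ a = Ac19.β ∧ y = St19.t))

include h0

lemma Psβs : Mφ.P St19.s Ac19.β St19.s = 0 := by
  by_contra h; rcases h0 _ _ _ h with ⟨_, h', _⟩ | ⟨_, _, h'⟩ | ⟨h', _, _⟩ <;> simp at h'

lemma Psαt : Mφ.P St19.s Ac19.α St19.t = 0 := by
  by_contra h; rcases h0 _ _ _ h with ⟨_, _, h'⟩ | ⟨_, h', _⟩ | ⟨h', _, _⟩ <;> simp at h'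

lemma Ptβs : Mφ.P St19.t Ac19.β St19.s = 0 := by
  by_contra h; rcases h0 _ _ _ h with ⟨h', _, _⟩ | ⟨_, _, h'⟩ | ⟨_, _, h'⟩ <;> simp at h'

lemma Ptα (y : St19) : Mφ.P St19.t Ac19.α y = 0 := by
  by_contra h; rcases h0 _ _ _ h with ⟨h', _, _⟩ | ⟨h', _, _⟩ | ⟨_, h', _⟩ <;> simp at h'

include h1 in
lemma en_sα : Mφ.Enabled St19.s Ac19.α := by
  unfold MDP.Enabled; rw [tsum_St19, h1, Psαt h0]; ring

include h2 in
lemma en_sβ : Mφ.Enabled St19.s Ac19.β := by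
  unfold MDP.Enabled; rw [tsum_St19, h2, Psβs h0]; ring

include h3 in
lemma en_tβ : Mφ.Enabled St19.t Ac19.β := by
  unfold MDP.Enabled; rw [tsum_St19, h3, Ptβs h0]; ring

omit h0

lemma stepExp_eq (σ : Scheduler Mφ) (p : FPath St19 Ac19) (g : FPath St19 Ac19 → ℝ) :
    stepExp Mφ σ p g =
      (σ.act p Ac19.α * Mφ.P (fpLast p) Ac19.α St19.s * g (fpExt p Ac19.α St19.s) +
       σ.act p Ac19.α * Mφ.P (fpLast p) Ac19.α St19.t * g (fpExt p Ac19.α St19.t)) +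
      (σ.act p Ac19.β * Mφ.P (fpLast p) Ac19.β St19.s * g (fpExt p Ac19.β St19.s) +
       σ.act p Ac19.β * Mφ.P (fpLast p) Ac19.β St19.t * g (fpExt p Ac19.β St19.t)) := by
  unfold stepExp
  rw [tsum_Ac19, tsum_St19, tsum_St19]

lemma act_sum (σ : Scheduler Mφ) (p : FPath St19 Ac19) :
    σ.act p Ac19.α + σ.act p Ac19.β = 1 := by
  have := σ.sum_one p; rwa [tsum_Ac19] at this

lemma P_pair_le_one (x : St19) (a : Ac19) :
    Mφ.P x a St19.s + Mφ.P x a St19.t ≤ 1 := by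
  have h := tsum_St19 (Mφ.P x a)
  by_cases hE : Mφ.Enabled x a
  · unfold MDP.Enabled at hE; rw [h] at hE; linarith
  · have := Mφ.zero_of_not_enabled x a hE
    rw [h] at this; linarith

lemma reachN_bounds (σ : Scheduler Mφ) (T : Set St19) :
    ∀ (n : ℕ) (p : FPath St19 Ac19),
      0 ≤ reachN Mφ σ T n p ∧ reachN Mφ σ T n p ≤ 1 := by
  intro n
  induction n with
  | zero => intro p; unfold reachN; split <;> norm_num
  | succ n ih =>
    intro p
    simp only [reachN]
    split
    · norm_num
    · rw [stepExp_eq]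
      have hαs := (ih (fpExt p Ac19.α St19.s))
      have hαt := (ih (fpExt p Ac19.α St19.t))
      have hβs := (ih (fpExt p Ac19.β St19.s))
      have hβt := (ih (fpExt p Ac19.β St19.t))
      have hact := act_sum σ p
      have hnα := σ.nonneg p Ac19.α
      have hnβ := σ.nonneg p Ac19.β
      have hPα := P_pair_le_one (Mφ := Mφ) (fpLast p) Ac19.α
      have hPβ := P_pair_le_one (Mφ := Mφ) (fpLast p) Ac19.β
      have hp1 := Mφ.nonneg (fpLast p) Ac19.α St19.s
      have hp2 := Mφ.nonneg (fpLast p) Ac19.α St19.t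
      have hp3 := Mφ.nonneg (fpLast p) Ac19.β St19.s
      have hp4 := Mφ.nonneg (fpLast p) Ac19.β St19.t
      constructor
      · have t1 := mul_nonneg (mul_nonneg hnα hp1) hαs.1
        have t2 := mul_nonneg (mul_nonneg hnα hp2) hαt.1
        have t3 := mul_nonneg (mul_nonneg hnβ hp3) hβs.1
        have t4 := mul_nonneg (mul_nonneg hnβ hp4) hβt.1
        linarith
      · have t1 := mul_le_of_le_one_right (mul_nonneg hnα hp1) hαs.2
        have t2 := mul_le_of_le_one_right (mul_nonneg hnα hp2) hαt.2
        have t3 := mul_le_of_le_one_right (mul_nonneg hnβ hp3) hβs.2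
        have t4 := mul_le_of_le_one_right (mul_nonneg hnβ hp4) hβt.2
        have u1 : σ.act p Ac19.α * (Mφ.P (fpLast p) Ac19.α St19.s + Mφ.P (fpLast p) Ac19.α St19.t) ≤ σ.act p Ac19.α := mul_le_of_le_one_right hnα hPα
        have u2 : σ.act p Ac19.β * (Mφ.P (fpLast p) Ac19.β St19.s + Mφ.P (fpLast p) Ac19.β St19.t) ≤ σ.act p Ac19.β := mul_le_of_le_one_right hnβ hPβ
        nlinarith [t1, t2, t3, t4, u1, u2]

/-- The "always β" scheduler. -/
def schβ (h2 : Mφ.P St19.s Ac19.β St19.t = 1) (h3 : Mφ.P St19.t Ac19.β St19.t = 1)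
    (h0 : ∀ (x : St19) (a : Ac19) (y : St19), Mφ.P x a y ≠ 0 →
      (x = St19.s ∧ a = Ac19.α ∧ y = St19.s) ∨
      (x = St19.s ∧ a = Ac19.β ∧ y = St19.t) ∨
      (x = St19.t ∧ a = Ac19.β ∧ y = St19.t)) : Scheduler Mφ where
  act _ a := if a = Ac19.β then 1 else 0
  nonneg := by intro p a; split <;> norm_num
  sum_one := by intro p; rw [tsum_Ac19]; simp
  not_enabled := by
    intro p a h
    cases a with
    | α => simp
    | β =>
      exfalso; apply h
      cases hc : fpLast p with
      | s => exact en_sβ h2 h0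
      | t => exact en_tβ h3 h0

/-- The "α at s, β at t" scheduler. -/
def schα (h1 : Mφ.P St19.s Ac19.α St19.s = 1) (h2 : Mφ.P St19.s Ac19.β St19.t = 1)
    (h3 : Mφ.P St19.t Ac19.β St19.t = 1)
    (h0 : ∀ (x : St19) (a : Ac19) (y : St19), Mφ.P x a y ≠ 0 →
      (x = St19.s ∧ a = Ac19.α ∧ y = St19.s) ∨
      (x = St19.s ∧ a = Ac19.β ∧ y = St19.t) ∨
      (x = St19.t ∧ a = Ac19.β ∧ y = St19.t)) : Scheduler Mφ where
  act p a := if fpLast p = St19.s then (if a = Ac19.α then 1 else 0)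
             else (if a = Ac19.β then 1 else 0)
  nonneg := by intro p a; split <;> split <;> norm_num
  sum_one := by intro p; rw [tsum_Ac19]; split <;> simp
  not_enabled := by
    intro p a h
    cases hc : fpLast p with
    | s =>
      rw [hc] at h
      cases a with
      | α => exact absurd (en_sα h1 h0) h
      | β => simp [hc]
    | t =>
      rw [hc] at h
      cases a with
      | α => simp [hc]
      | β => exact absurd (en_tβ h3 h0) h

lemma reachN_t (σ : Scheduler Mφ) (n : ℕ) (p : FPath St19 Ac19)
    (hp : fpLast p = St19.t) : reachN Mφ σ {St19.t} n p = 1 := by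
  cases n <;> simp [reachN, hp]

include h2 h3 h0 in
lemma reachN_schβ (n : ℕ) (p : FPath St19 Ac19) (hp : fpLast p = St19.s) :
    reachN Mφ (schβ h2 h3 h0) {St19.t} (n + 1) p = 1 := by
  simp only [reachN]
  rw [if_neg (by simp [hp])]
  rw [stepExp_eq]
  have hact : ∀ a : Ac19, (schβ h2 h3 h0).act p a = if a = Ac19.β then 1 else 0 := fun _ => rfl
  rw [hact, hact]
  simp only [hp]
  rw [Psβs h0, h2]
  rw [reachN_t _ _ _ (fpLast_fpExt p Ac19.β St19.t)]
  simp

include h1 h2 h3 h0 in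
lemma reachN_schα (n : ℕ) : ∀ (p : FPath St19 Ac19), fpLast p = St19.s →
    reachN Mφ (schα h1 h2 h3 h0) {St19.t} n p = 0 := by
  induction n with
  | zero => intro p hp; simp [reachN, hp]
  | succ n ih =>
    intro p hp
    simp only [reachN]
    rw [if_neg (by simp [hp]), stepExp_eq]
    have hact : ∀ a : Ac19, (schα h1 h2 h3 h0).act p a =
        if fpLast p = St19.s then (if a = Ac19.α then 1 else 0)
        else (if a = Ac19.β then 1 else 0) := fun _ => rfl
    rw [hact, hact]
    simp only [hp, if_pos rfl]
    rw [Psαt h0, ih _ (fpLast_fpExt p Ac19.α St19.s)]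
    simp

include h2 h3 h0 in
lemma reachProb_schβ : reachProb Mφ (schβ h2 h3 h0) St19.s {St19.t} = 1 := by
  unfold reachProb
  have hb : BddAbove (Set.range fun n => reachN Mφ (schβ h2 h3 h0) {St19.t} n
      ((St19.s, []) : FPath St19 Ac19)) := by
    refine ⟨1, ?_⟩
    rintro x ⟨n, rfl⟩
    exact (reachN_bounds _ _ n _).2
  apply le_antisymm
  · exact ciSup_le fun n => (reachN_bounds _ _ n _).2
  · have h := reachN_schβ h2 h3 h0 0 (St19.s, []) rfl
    calc (1 : ℝ) = reachN Mφ (schβ h2 h3 h0) {St19.t} 1 (St19.s, []) := h.symm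
    _ ≤ _ := le_ciSup hb 1

include h1 h2 h3 h0 in
lemma reachProb_schα : reachProb Mφ (schα h1 h2 h3 h0) St19.s {St19.t} = 0 := by
  unfold reachProb
  have h : ∀ n : ℕ, reachN Mφ (schα h1 h2 h3 h0) {St19.t} n ((St19.s, []) : FPath St19 Ac19)
      = 0 := fun n => reachN_schα h1 h2 h3 h0 n _ rfl
  simp only [h]
  exact ciSup_const

end Red
/-- Literals are encoded as pairs `(i, b) : Fin N × Bool`, where `(i, true)` is the positive
literal `xᵢ` and `(i, false)` the negative literal `x̄ᵢ`.  The clauses of the 3CNF formula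
`φ` are given by `lit : Fin M → Fin 3 → Fin N × Bool`; `(lit j h).1` is the index `κ(j,h)`
and the sign `a_{j,h}` is `2` for a positive and `-2` for a negative literal. -/
theorem threeSat_iff_conjRelReach_schedulers
    (N Mn : ℕ) (lit : Fin Mn → Fin 3 → Fin N × Bool)
    (Mφ : MDP St19 Ac19)
    (h1 : Mφ.P St19.s Ac19.α St19.s = 1)
    (h2 : Mφ.P St19.s Ac19.β St19.t = 1)
    (h3 : Mφ.P St19.t Ac19.β St19.t = 1)
    (h0 : ∀ (x : St19) (a : Ac19) (y : St19), Mφ.P x a y ≠ 0 →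
      (x = St19.s ∧ a = Ac19.α ∧ y = St19.s) ∨
      (x = St19.s ∧ a = Ac19.β ∧ y = St19.t) ∨
      (x = St19.t ∧ a = Ac19.β ∧ y = St19.t)) :
    (∃ v : Fin N → Bool, ∀ j : Fin Mn, ∃ h : Fin 3, v (lit j h).1 = (lit j h).2) ↔
    (∃ σ : Fin N → Scheduler Mφ,
        (∀ i : Fin N, |reachProb Mφ (σ i) St19.s {St19.t} - 1/2| > 1/4) ∧
        (∀ j : Fin Mn,
          (∑ h : Fin 3,
            (if (lit j h).2 then (2 : ℝ) else -2) *
              (reachProb Mφ (σ (lit j h).1) St19.s {St19.t} - 1/2)) ≥ -1)) := by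
  constructor
  · rintro ⟨v, hv⟩
    refine ⟨fun i => if v i then schβ h2 h3 h0 else schα h1 h2 h3 h0, ?_, ?_⟩
    · intro i
      dsimp only
      by_cases h : v i
      · rw [if_pos h, reachProb_schβ h2 h3 h0]
        rw [show (1:ℝ) - 1/2 = 1/2 by norm_num, abs_of_nonneg (by norm_num)]
        norm_num
      · rw [if_neg h, reachProb_schα h1 h2 h3 h0]
        rw [show (0:ℝ) - 1/2 = -(1/2) by norm_num, abs_neg,
          abs_of_nonneg (by norm_num : (0:ℝ) ≤ 1/2)]
        norm_num
    · intro j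
      obtain ⟨h, hh⟩ := hv j
      have hr : ∀ i : Fin N,
          reachProb Mφ (if v i then schβ h2 h3 h0 else schα h1 h2 h3 h0) St19.s {St19.t}
            = if v i then 1 else 0 := by
        intro i
        by_cases hvi : v i
        · rw [if_pos hvi, if_pos hvi, reachProb_schβ h2 h3 h0]
        · rw [if_neg hvi, if_neg hvi, reachProb_schα h1 h2 h3 h0]
      simp only [hr]
      have hterm : ∀ h' : Fin 3,
          (if (lit j h').2 then (2:ℝ) else -2) *
            ((if v (lit j h').1 then (1:ℝ) else 0) - 1/2) ≥ -1 := by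
        intro h'; split_ifs <;> norm_num
      have hsat : (if (lit j h).2 then (2:ℝ) else -2) *
          ((if v (lit j h).1 then (1:ℝ) else 0) - 1/2) = 1 := by
        cases hb : (lit j h).2 with
        | true => rw [hb] at hh; simp [hb, hh]; norm_num
        | false => rw [hb] at hh; simp [hb, hh]
      have hle := Finset.single_le_sum
        (f := fun h' : Fin 3 => (if (lit j h').2 then (2:ℝ) else -2) *
          ((if v (lit j h').1 then (1:ℝ) else 0) - 1/2) + 1)
        (fun i _ => by have := hterm i; linarith) (Finset.mem_univ h)
      simp only [Finset.sum_add_distrib, Finset.sum_const, Finset.card_univ,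
        Fintype.card_fin, nsmul_eq_mul] at hle
      linarith
  · rintro ⟨σ, hσ1, hσ2⟩
    refine ⟨fun i => decide ((1:ℝ)/2 < reachProb Mφ (σ i) St19.s {St19.t}), ?_⟩
    intro j
    by_contra hcon
    push_neg at hcon
    have hterm : ∀ h : Fin 3,
        (if (lit j h).2 then (2:ℝ) else -2) *
          (reachProb Mφ (σ (lit j h).1) St19.s {St19.t} - 1/2) < -(1/2) := by
      intro h
      have habs := hσ1 (lit j h).1
      have hne := hcon h
      set r := reachProb Mφ (σ (lit j h).1) St19.s {St19.t} with hrdef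
      cases hb : (lit j h).2 with
      | true =>
        rw [hb] at hne
        have hv : ¬ ((1:ℝ)/2 < r) := by
          intro hlt
          exact hne (by simp [hrdef, decide_eq_true_eq]; linarith)
        push_neg at hv
        rw [abs_of_nonpos (by linarith)] at habs
        rw [if_pos rfl]
        linarith
      | false =>
        rw [hb] at hne
        have hv : (1:ℝ)/2 < r := by
          by_contra hnlt
          apply hne
          simp only [decide_eq_false_iff_not]
          intro hlt; exact hnlt (by rw [hrdef] at hlt ⊢; exact hlt)
        rw [abs_of_nonneg (by linarith)] at habs
        rw [if_neg (by simp)]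
        linarith
    have hlt : (∑ h : Fin 3,
        (if (lit j h).2 then (2:ℝ) else -2) *
          (reachProb Mφ (σ (lit j h).1) St19.s {St19.t} - 1/2)) <
        ∑ _h : Fin 3, (-(1/2) : ℝ) :=
      Finset.sum_lt_sum_of_nonempty ⟨0, Finset.mem_univ 0⟩ (fun i _ => hterm i)
    simp only [Finset.sum_const, Finset.card_univ, Fintype.card_fin, nsmul_eq_mul] at hlt
    have hsum := hσ2 j
    linarith
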